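/- Suppose the input domain D = Δ^{p_1} × ⋯ × Δ^{p_τ} is a product of simplices, and the affine function is f(x) = Σ_{i=1}^τ Σ_{j=1}^{p_i} w_{i,j} x_{i,j} + b, with the weights in each simplex sorted so that w_{i,1} ≤ ⋯ ≤ w_{i,p_i}. Let Q ⊆ ℝ^η × ℝ × ℝ be the set of (x, y, z) with x ∈ D, y ≥ 0, z ∈ [0, 1], satisfying y ≥ f(x) and, for every mapping J : {1,…,τ} → ℤ with J(i) ∈ {1,…,p_i} for all i, y ≤ Σ_{i=1}^τ ( w_{i,J(i)} z + Σ_{j = J(i)+1}^{p_i} (w_{i,j} − w_{i,J(i)}) x_{i,j} ) + b z. Then Q together with z ∈ {0,1} is an ideal MIP formulation of gr(ReLU ∘ f; D): (i) the projection onto the (x, y)-coordinates of {(x,y,z) ∈ Q : z ∈ {0,1}} equals gr(ReLU ∘ f; D) = {(x, max{0, f(x)}) : x ∈ D}; and (ii) every extreme point of Q satisfies z ∈ {0,1}. -/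

import Mathlib

open Finset

lemma simplex_lb {n : ℕ} (w x : Fin n → ℝ) (hw : Monotone w)
    (hx0 : ∀ j, 0 ≤ x j) (hx1 : ∑ j, x j = 1) (J : Fin n) :
    ∑ j, w j * x j ≤ w J + ∑ j ∈ univ.filter (fun j => J < j), (w j - w J) * x j := by
  have h1 : w J + ∑ j ∈ univ.filter (fun j => J < j), (w j - w J) * x j
      = ∑ j, (w J * x j + if J < j then (w j - w J) * x j else 0) := by
    rw [Finset.sum_add_distrib, ← Finset.mul_sum, hx1, mul_one, ← Finset.sum_filter]
  rw [h1]
  apply Finset.sum_le_sum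
  intro j _
  by_cases h : J < j
  · simp only [h, if_true]
    exact le_of_eq (by ring)
  · have hle : w j ≤ w J := hw (le_of_not_gt h)
    simp only [h, if_false, add_zero]
    exact mul_le_mul_of_nonneg_right hle (hx0 j)

lemma simplex_eq_bot {n : ℕ} (w x : Fin n → ℝ) (hx1 : ∑ j, x j = 1)
    (J : Fin n) (hJ : ∀ j, J ≤ j) :
    w J + ∑ j ∈ univ.filter (fun j => J < j), (w j - w J) * x j = ∑ j, w j * x j := by
  have hfe : univ.filter (fun j => J < j) = univ.erase J := by
    ext j
    simp only [mem_filter, mem_univ, true_and, mem_erase, and_true]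
    exact ⟨fun h => h.ne', fun h => (hJ j).lt_of_ne (Ne.symm h)⟩
  have he : ∑ j ∈ univ.erase J, (w j - w J) * x j = ∑ j, (w j - w J) * x j :=
    Finset.sum_erase _ (by ring)
  have hc : ∑ j, (w j - w J) * x j = ∑ j, (w j * x j - w J * x j) :=
    Finset.sum_congr rfl (fun j _ => by ring)
  rw [hfe, he, hc, Finset.sum_sub_distrib, ← Finset.mul_sum, hx1]
  ring

lemma greedy {n : ℕ} (hn : 0 < n) (w x : Fin n → ℝ) {z : ℝ}
    (hx0 : ∀ j, 0 ≤ x j) (hx1 : ∑ j, x j = 1) (hz0 : 0 < z) (hz1 : z ≤ 1) :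
    ∃ (v : Fin n → ℝ) (J : Fin n), (∀ j, 0 ≤ v j) ∧ (∀ j, z * v j ≤ x j) ∧ (∑ j, v j = 1) ∧
      z * (∑ j, w j * v j)
        = w J * z + ∑ j ∈ univ.filter (fun j => J < j), (w j - w J) * x j := by
  set T : Fin n → ℝ := fun j => ∑ k ∈ univ.filter (fun k => j < k), x k with hT
  -- the last index has empty tail
  have hL : T ⟨n - 1, by omega⟩ = 0 := by
    apply Finset.sum_eq_zero
    intro k hk
    exfalso
    have hkn := k.isLt
    simp only [mem_filter, mem_univ, true_and, Fin.lt_def, Fin.val_mk] at hk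
    omega
  have hS : (univ.filter (fun j => T j ≤ z)).Nonempty :=
    ⟨⟨n - 1, by omega⟩, by simp [hL, hz0.le]⟩
  set J : Fin n := (univ.filter (fun j => T j ≤ z)).min' hS with hJ
  have hJ1 : T J ≤ z := by
    have := Finset.min'_mem _ hS
    simpa using this
  have hJmin : ∀ j, T j ≤ z → J ≤ j := fun j hj =>
    Finset.min'_le _ j (by simpa using hj)
  -- the sum of x over indices ≥ J
  have hinsert : x J + T J = ∑ k ∈ univ.filter (fun k => J ≤ k), x k := by
    have : univ.filter (fun k => J ≤ k) = insert J (univ.filter (fun k => J < k)) := by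
      ext k
      simp only [mem_filter, mem_univ, true_and, mem_insert]
      constructor
      · intro h
        rcases eq_or_lt_of_le h with h' | h'
        · exact Or.inl h'.symm
        · exact Or.inr h'
      · rintro (rfl | h)
        · exact le_refl _
        · exact h.le
    rw [this, Finset.sum_insert (by simp)]
  have hJ2 : z ≤ x J + T J := by
    rw [hinsert]
    by_cases h0 : J.val = 0
    · have : univ.filter (fun k => J ≤ k) = univ := by
        ext k; simp [Fin.le_def, h0]
      rw [this, hx1]; exact hz1
    · set J' : Fin n := ⟨J.val - 1, by omega⟩ with hJ'
      have hJ'J : J' < J := by rw [Fin.lt_def]; simp [hJ']; omega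
      have hzT : z < T J' := by
        by_contra hcon
        exact absurd (hJmin J' (le_of_not_gt hcon)) (not_le.mpr hJ'J)
      have : T J' = ∑ k ∈ univ.filter (fun k => J ≤ k), x k := by
        apply Finset.sum_congr _ (fun _ _ => rfl)
        ext k
        simp only [mem_filter, mem_univ, true_and]
        rw [Fin.lt_def, Fin.le_def]
        simp only [hJ']
        omega
      linarith [this ▸ hzT]
  -- the greedy point
  set v : Fin n → ℝ := fun j => if j = J then (z - T J) / z else if J < j then x j / z else 0
    with hv
  have hvJ : v J = (z - T J) / z := by simp [hv]
  -- generic sum computation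
  have hgen : ∀ c : Fin n → ℝ, ∑ j, c j * v j
      = c J * ((z - T J) / z) + ∑ j ∈ univ.filter (fun j => J < j), c j * (x j / z) := by
    intro c
    rw [← Finset.sum_erase_add univ _ (mem_univ J), hvJ, add_comm]
    congr 1
    have h1 : ∑ j ∈ univ.erase J, c j * v j
        = ∑ j ∈ univ.erase J, (if J < j then c j * (x j / z) else 0) := by
      apply Finset.sum_congr rfl
      intro j hj
      have hjJ : j ≠ J := (Finset.mem_erase.mp hj).1
      by_cases h : J < j
      · simp [hv, hjJ, h]
      · simp [hv, hjJ, h]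
    rw [h1, ← Finset.sum_filter]
    apply Finset.sum_congr _ (fun _ _ => rfl)
    ext k
    simp only [mem_filter, mem_erase, mem_univ, true_and, and_true]
    exact ⟨fun h => h.2, fun h => ⟨h.ne', h⟩⟩
  refine ⟨v, J, ?_, ?_, ?_, ?_⟩
  · intro j
    rw [hv]
    dsimp only
    split
    · exact div_nonneg (by linarith) hz0.le
    · split
      · exact div_nonneg (hx0 j) hz0.le
      · exact le_refl 0
  · intro j
    rw [hv]
    dsimp only
    split
    · next h => rw [h, mul_div_cancel₀ _ hz0.ne']; linarith
    · split
      · rw [mul_div_cancel₀ _ hz0.ne']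
      · rw [mul_zero]; exact hx0 j
  · have h := hgen (fun _ => 1)
    simp only [one_mul] at h
    rw [h, ← Finset.sum_div]
    have hTr : ∑ i ∈ univ.filter (fun j => J < j), x i = T J := rfl
    rw [hTr, ← add_div, div_eq_one_iff_eq hz0.ne']
    ring
  · rw [hgen w, mul_add]
    have h1 : z * (w J * ((z - T J) / z)) = w J * z - w J * T J := by
      field_simp
    have h2 : z * ∑ j ∈ univ.filter (fun j => J < j), w j * (x j / z)
        = ∑ j ∈ univ.filter (fun j => J < j), w j * x j := by
      rw [Finset.mul_sum]
      apply Finset.sum_congr rfl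
      intro j _
      field_simp
    have h3 : w J * T J = ∑ j ∈ univ.filter (fun j => J < j), w J * x j := by
      rw [hT, Finset.mul_sum]
    rw [h1, h2, h3]
    have h4 : ∑ j ∈ univ.filter (fun j => J < j), (w j - w J) * x j
        = ∑ j ∈ univ.filter (fun j => J < j), w j * x j
          - ∑ j ∈ univ.filter (fun j => J < j), w J * x j := by
      rw [← Finset.sum_sub_distrib]
      exact Finset.sum_congr rfl (fun j _ => by ring)
    rw [h4]
    ring

lemma interp {a c y : ℝ} (h1 : a ≤ y) (h2 : y ≤ c) :
    ∃ t : ℝ, 0 ≤ t ∧ t ≤ 1 ∧ (1 - t) * a + t * c = y := by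
  by_cases h : a = c
  · exact ⟨0, le_refl 0, zero_le_one, by
      have : a = y := le_antisymm h1 (h ▸ h2)
      rw [← this]; ring⟩
  · have hac : a < c := lt_of_le_of_ne (h1.trans h2) h
    have hne : c - a ≠ 0 := by intro hc; exact h (by linarith)
    refine ⟨(y - a) / (c - a), div_nonneg (by linarith) (by linarith), ?_, ?_⟩
    · rw [div_le_one (by linarith)]; linarith
    · field_simp
      ring

noncomputable section

/-- The product of simplices `Δ^{p₁} × ⋯ × Δ^{p_τ}`, with coordinates indexed by pairs
`(i, j)` where `i : Fin τ` and `j : Fin (p i)`. -/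
def Dprod {τ : ℕ} (p : Fin τ → ℕ) : Set ((Σ i : Fin τ, Fin (p i)) → ℝ) :=
  {x | ∀ i : Fin τ, (fun j : Fin (p i) => x ⟨i, j⟩) ∈ stdSimplex ℝ (Fin (p i))}

theorem stmt18 {τ : ℕ} (hτ : 1 ≤ τ) (p : Fin τ → ℕ) (hp : ∀ i, 1 ≤ p i)
    (w : (Σ i : Fin τ, Fin (p i)) → ℝ) (b : ℝ)
    (hsorted : ∀ i : Fin τ, Monotone fun j : Fin (p i) => w ⟨i, j⟩)
    (hirrpos : ∃ x ∈ Dprod p, 0 < ∑ q, w q * x q + b)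
    (hirrneg : ∃ x ∈ Dprod p, ∑ q, w q * x q + b < 0)
    (Q : Set (((Σ i : Fin τ, Fin (p i)) → ℝ) × ℝ × ℝ))
    (hQ : Q = {r | r.1 ∈ Dprod p ∧ 0 ≤ r.2.1 ∧ 0 ≤ r.2.2 ∧ r.2.2 ≤ 1
      ∧ ∑ q, w q * r.1 q + b ≤ r.2.1
      ∧ ∀ J : (i : Fin τ) → Fin (p i),
          r.2.1 ≤ ∑ i, (w ⟨i, J i⟩ * r.2.2
            + ∑ j ∈ Finset.univ.filter (fun j => J i < j),
                (w ⟨i, j⟩ - w ⟨i, J i⟩) * r.1 ⟨i, j⟩)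
          + b * r.2.2}) :
    -- (i) validity
    ((fun r : ((Σ i : Fin τ, Fin (p i)) → ℝ) × ℝ × ℝ => (r.1, r.2.1)) ''
        {r ∈ Q | r.2.2 = 0 ∨ r.2.2 = 1}
      = {q : ((Σ i : Fin τ, Fin (p i)) → ℝ) × ℝ | q.1 ∈ Dprod p
          ∧ q.2 = max 0 (∑ s, w s * q.1 s + b)})
    -- (ii) every extreme point of Q has binary z
    ∧ (∀ r ∈ Set.extremePoints ℝ Q, r.2.2 = 0 ∨ r.2.2 = 1) := by
  have hsig : ∀ F : (Σ i : Fin τ, Fin (p i)) → ℝ, ∑ q, F q = ∑ i, ∑ j, F ⟨i, j⟩ := by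
    intro F
    rw [← Finset.univ_sigma_univ, Finset.sum_sigma]
  -- membership of the z = 1 points
  have hmem1 : ∀ x, x ∈ Dprod p → 0 ≤ ∑ q, w q * x q + b →
      (x, ∑ q, w q * x q + b, (1:ℝ)) ∈ Q := by
    intro x hx hf
    rw [hQ]
    refine ⟨hx, hf, zero_le_one, le_refl 1, le_refl _, ?_⟩
    intro J
    have key : ∀ i ∈ univ, ∑ j, w ⟨i, j⟩ * x ⟨i, j⟩
        ≤ w ⟨i, J i⟩ * 1 + ∑ j ∈ univ.filter (fun j => J i < j),
            (w ⟨i, j⟩ - w ⟨i, J i⟩) * x ⟨i, j⟩ := by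
      intro i _
      rw [mul_one]
      exact simplex_lb (fun j => w ⟨i, j⟩) (fun j => x ⟨i, j⟩)
        (hsorted i) (hx i).1 (hx i).2 (J i)
    have hs := Finset.sum_le_sum key
    have he := hsig (fun q => w q * x q)
    simp only [mul_one] at hs ⊢
    linarith
  -- membership of the z = 0 points
  have hmem0 : ∀ x, x ∈ Dprod p → ∑ q, w q * x q + b ≤ 0 →
      (x, (0:ℝ), (0:ℝ)) ∈ Q := by
    intro x hx hf
    rw [hQ]
    refine ⟨hx, le_refl 0, le_refl 0, zero_le_one, hf, ?_⟩
    intro J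
    simp only [mul_zero, zero_add, add_zero]
    apply Finset.sum_nonneg
    intro i _
    apply Finset.sum_nonneg
    intro j hj
    have hji : J i < j := (Finset.mem_filter.mp hj).2
    have hw := hsorted i hji.le
    exact mul_nonneg (by simpa using sub_nonneg.mpr hw) ((hx i).1 j)
  constructor
  · -- part (i)
    ext ⟨x, y⟩
    constructor
    · rintro ⟨⟨x', y', z'⟩, ⟨hrQ, hz⟩, heq⟩
      rw [hQ] at hrQ
      obtain ⟨hxD, hy0, hz0, hz1, hlb, hub⟩ := hrQ
      simp only [Prod.mk.injEq] at heq
      obtain ⟨rfl, rfl⟩ := heq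
      rcases hz with hz | hz
      · -- z' = 0
        subst hz
        have hJmax := hub (fun i => ⟨p i - 1, by have := hp i; omega⟩)
        have hzero : ∀ i ∈ univ,
            (w ⟨i, (⟨p i - 1, by have := hp i; omega⟩ : Fin (p i))⟩ * (0:ℝ)
              + ∑ j ∈ univ.filter
                  (fun j => (⟨p i - 1, by have := hp i; omega⟩ : Fin (p i)) < j),
                  (w ⟨i, j⟩ - w ⟨i, ⟨p i - 1, by have := hp i; omega⟩⟩) * x' ⟨i, j⟩) = 0 := by
          intro i _
          have hemp : univ.filter
              (fun j => (⟨p i - 1, by have := hp i; omega⟩ : Fin (p i)) < j) = ∅ := by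
            apply Finset.filter_false_of_mem
            intro j _
            have := j.isLt
            simp only [Fin.lt_def, Fin.val_mk]
            omega
          rw [hemp, mul_zero, Finset.sum_empty, add_zero]
        rw [Finset.sum_congr rfl hzero] at hJmax
        simp only [Finset.sum_const_zero, mul_zero, zero_add, add_zero] at hJmax
        have hy' : y' = 0 := le_antisymm hJmax hy0
        refine ⟨hxD, ?_⟩
        have : ∑ s, w s * x' s + b ≤ 0 := by linarith
        simp only [hy', max_eq_left this]
      · -- z' = 1
        subst hz
        have hJ0 := hub (fun i => ⟨0, hp i⟩)
        have heqi : ∀ i ∈ univ,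
            (w ⟨i, (⟨0, hp i⟩ : Fin (p i))⟩ * (1:ℝ)
              + ∑ j ∈ univ.filter (fun j => (⟨0, hp i⟩ : Fin (p i)) < j),
                  (w ⟨i, j⟩ - w ⟨i, ⟨0, hp i⟩⟩) * x' ⟨i, j⟩)
            = ∑ j, w ⟨i, j⟩ * x' ⟨i, j⟩ := by
          intro i _
          rw [mul_one]
          exact simplex_eq_bot (fun j => w ⟨i, j⟩) (fun j => x' ⟨i, j⟩) (hxD i).2
            ⟨0, hp i⟩ (fun j => Fin.le_def.mpr (Nat.zero_le _))
        rw [Finset.sum_congr rfl heqi, mul_one, ← hsig (fun q => w q * x' q)] at hJ0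
        have hy' : y' = ∑ s, w s * x' s + b := le_antisymm hJ0 hlb
        exact ⟨hxD, by rw [hy', max_eq_right (hy' ▸ hy0)]⟩
    · rintro ⟨hxD, hy⟩
      simp only [Set.mem_setOf_eq] at hy
      rcases le_or_gt 0 (∑ s, w s * x s + b) with h | h
      · have hyf : y = ∑ s, w s * x s + b := by rw [hy, max_eq_right h]
        refine ⟨(x, y, 1), ⟨by rw [hyf]; exact hmem1 x hxD h, Or.inr rfl⟩, rfl⟩
      · have hyf : y = 0 := by rw [hy, max_eq_left h.le]
        refine ⟨(x, y, 0), ⟨by rw [hyf]; exact hmem0 x hxD h.le, Or.inl rfl⟩, rfl⟩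
  · -- part (ii)
    rintro ⟨x, y, z⟩ hr
    by_contra hcon
    push_neg at hcon
    obtain ⟨hne0, hne1⟩ := hcon
    simp only at hne0 hne1
    have hrQ := hr.1
    rw [hQ] at hrQ
    obtain ⟨hxD, hy0, hz0, hz1, hlb, hub⟩ := hrQ
    simp only at hxD hy0 hz0 hz1 hlb hub
    have hz0' : 0 < z := lt_of_le_of_ne hz0 (Ne.symm hne0)
    have hz1' : z < 1 := lt_of_le_of_ne hz1 hne1
    -- greedy points per simplex
    choose v J hv0 hvle hvsum hval using fun i =>
      greedy (hp i) (fun j => w ⟨i, j⟩) (fun j => x ⟨i, j⟩) (hxD i).1 (hxD i).2 hz0' hz1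
    set xg : (Σ i : Fin τ, Fin (p i)) → ℝ := fun q => v q.1 q.2 with hxg
    -- the greedy value bounds y from above
    have hBy : y ≤ z * (∑ q, w q * xg q + b) := by
      have h := hub J
      have hcompute : z * (∑ q, w q * xg q + b)
          = ∑ i, (w ⟨i, J i⟩ * z
              + ∑ j ∈ univ.filter (fun j => J i < j),
                  (w ⟨i, j⟩ - w ⟨i, J i⟩) * x ⟨i, j⟩) + b * z := by
        rw [hsig (fun q => w q * xg q), mul_add, Finset.mul_sum]
        rw [Finset.sum_congr rfl (fun i _ => hval i)]
        ring
      linarith [hcompute ▸ h]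
    -- z * f(x) bounds y from below
    have ha : z * (∑ q, w q * x q + b) ≤ y := by
      rcases le_or_gt 0 (∑ q, w q * x q + b) with h | h
      · nlinarith
      · nlinarith
    obtain ⟨t, ht0, ht1, hty⟩ := interp ha hBy
    set x1 : (Σ i : Fin τ, Fin (p i)) → ℝ := fun q => (1 - t) * x q + t * xg q with hx1
    have hx1D : x1 ∈ Dprod p := by
      intro i
      refine ⟨fun j => add_nonneg (mul_nonneg (by linarith) ((hxD i).1 j))
        (mul_nonneg ht0 (hv0 i j)), ?_⟩
      show ∑ j, ((1 - t) * x ⟨i, j⟩ + t * xg ⟨i, j⟩) = 1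
      rw [Finset.sum_add_distrib, ← Finset.mul_sum, ← Finset.mul_sum]
      have h1 : ∑ j, x ⟨i, j⟩ = 1 := (hxD i).2
      have h2 : ∑ j, xg ⟨i, j⟩ = 1 := hvsum i
      rw [h1, h2]
      ring
    have hx1le : ∀ q, z * x1 q ≤ x q := by
      rintro ⟨i, j⟩
      have hxq : 0 ≤ x ⟨i, j⟩ := (hxD i).1 j
      have h2 : z * xg ⟨i, j⟩ ≤ x ⟨i, j⟩ := hvle i j
      show z * ((1 - t) * x ⟨i, j⟩ + t * xg ⟨i, j⟩) ≤ x ⟨i, j⟩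
      nlinarith [mul_le_mul_of_nonneg_left h2 ht0,
        mul_nonneg (mul_nonneg (sub_nonneg.2 ht1) (sub_nonneg.2 hz1)) hxq]
    have hf1 : z * (∑ q, w q * x1 q + b) = y := by
      have hsum : ∑ q, w q * x1 q
          = (1 - t) * (∑ q, w q * x q) + t * (∑ q, w q * xg q) := by
        rw [Finset.mul_sum, Finset.mul_sum, ← Finset.sum_add_distrib]
        exact Finset.sum_congr rfl (fun q _ => by show w q * ((1-t) * x q + t * xg q) = _; ring)
      rw [hsum]
      linear_combination hty
    have h0y1 : 0 ≤ ∑ q, w q * x1 q + b := by nlinarith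
    set x0 : (Σ i : Fin τ, Fin (p i)) → ℝ := fun q => (x q - z * x1 q) / (1 - z) with hx0
    have h1z : (1:ℝ) - z ≠ 0 := by linarith
    have hx0D : x0 ∈ Dprod p := by
      intro i
      refine ⟨fun j => div_nonneg (sub_nonneg.2 (hx1le ⟨i, j⟩)) (by linarith), ?_⟩
      show ∑ j, (x ⟨i, j⟩ - z * x1 ⟨i, j⟩) / (1 - z) = 1
      rw [← Finset.sum_div, Finset.sum_sub_distrib, ← Finset.mul_sum,
        (hxD i).2, (hx1D i).2, mul_one]
      field_simp
    have hf0 : (1 - z) * (∑ q, w q * x0 q + b) = (∑ q, w q * x q + b) - y := by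
      have hkey : ∑ q, (1 - z) * (w q * x0 q) = ∑ q, (w q * x q - z * (w q * x1 q)) := by
        apply Finset.sum_congr rfl
        intro q _
        show (1 - z) * (w q * ((x q - z * x1 q) / (1 - z))) = _
        field_simp
      have h2 : ∑ q, (w q * x q - z * (w q * x1 q))
          = ∑ q, w q * x q - z * ∑ q, w q * x1 q := by
        rw [Finset.sum_sub_distrib, ← Finset.mul_sum]
      rw [mul_add, Finset.mul_sum, hkey, h2]
      linear_combination -hf1
    have hf0le : ∑ q, w q * x0 q + b ≤ 0 := by nlinarith
    -- the two endpoints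
    have hr0 : (x0, (0:ℝ), (0:ℝ)) ∈ Q := hmem0 x0 hx0D hf0le
    have hr1 : (x1, ∑ q, w q * x1 q + b, (1:ℝ)) ∈ Q := hmem1 x1 hx1D h0y1
    have hseg : ((x, y, z) : ((Σ i : Fin τ, Fin (p i)) → ℝ) × ℝ × ℝ)
        ∈ openSegment ℝ (x0, (0:ℝ), (0:ℝ)) (x1, ∑ q, w q * x1 q + b, (1:ℝ)) := by
      refine ⟨1 - z, z, by linarith, hz0', by ring, ?_⟩
      show ((1 - z) • x0 + z • x1, (1 - z) * 0 + z * (∑ q, w q * x1 q + b),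
        (1 - z) * 0 + z * 1) = (x, y, z)
      simp only [Prod.mk.injEq]
      refine ⟨?_, by linarith [hf1], by ring⟩
      funext q
      show (1 - z) * ((x q - z * x1 q) / (1 - z)) + z * x1 q = x q
      field_simp
      ring
    obtain h0 := hr.2 hr0 hr1 hseg
    have : (0:ℝ) = z := congrArg (fun r => r.2.2) h0
    exact hne0 this.symm

end
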